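/- Under Assumptions A1 and A2, ker(R^⊤) equals the closure in U* of the set { T^⊤ τ : τ ∈ Λ*, (I + X^⊤) τ = 0 }. Moreover, the set { T^⊤ τ : τ ∈ Λ*, (I + X^⊤) τ = 0 } is closed if and only if range((I − X) T) is closed in Λ. -/

import Mathlib

/-- The transpose (dual map) `B^⊤ : Y* → X*` of a bounded linear operator `B : X → Y`. -/
noncomputable def trOp {X Y : Type*} [NormedAddCommGroup X] [NormedSpace ℂ X]
    [NormedAddCommGroup Y] [NormedSpace ℂ Y] (B : X →L[ℂ] Y) :
    (Y →L[ℂ] ℂ) →L[ℂ] (X →L[ℂ] ℂ) :=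
  (ContinuousLinearMap.compL ℂ X Y ℂ).flip B

open ContinuousLinearMap InnerProductSpace

local notation "⟪" x ", " y "⟫" => @inner ℂ _ _ x y

section Aux

variable {E F : Type*} [NormedAddCommGroup E] [InnerProductSpace ℂ E] [CompleteSpace E]
  [NormedAddCommGroup F] [InnerProductSpace ℂ F] [CompleteSpace F]

lemma ker_adjoint_eq (A : E →L[ℂ] F) :
    LinearMap.ker (adjoint A : F →ₗ[ℂ] E) = (LinearMap.range (A : E →ₗ[ℂ] F))ᗮ := by
  ext y
  rw [LinearMap.mem_ker, Submodule.mem_orthogonal, ContinuousLinearMap.coe_coe]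
  constructor
  · rintro h v ⟨x, rfl⟩
    rw [ContinuousLinearMap.coe_coe, ← ContinuousLinearMap.adjoint_inner_right, h, inner_zero_right]
  · intro h
    have := h (A (adjoint A y)) ⟨_, rfl⟩
    rwa [← ContinuousLinearMap.adjoint_inner_right, inner_self_eq_zero] at this

lemma closure_range_adjoint (A : E →L[ℂ] F) :
    closure (Set.range ⇑(adjoint A)) = ((LinearMap.ker (A : E →ₗ[ℂ] F))ᗮ : Set E) := by
  have h1 : (LinearMap.range (adjoint A : F →ₗ[ℂ] E))ᗮ = LinearMap.ker (A : E →ₗ[ℂ] F) := by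
    rw [← ker_adjoint_eq, ContinuousLinearMap.adjoint_adjoint]
  have h2 : (LinearMap.range (adjoint A : F →ₗ[ℂ] E) : Set E) = Set.range ⇑(adjoint A) := rfl
  rw [← h1, Submodule.orthogonal_orthogonal_eq_closure, Submodule.topologicalClosure_coe, h2]

lemma isClosed_range_adjoint_of (A : E →L[ℂ] F) (h : IsClosed (Set.range ⇑A)) :
    IsClosed (Set.range ⇑(adjoint A)) := by
  suffices hs : Set.range ⇑(adjoint A) = ((LinearMap.ker (A : E →ₗ[ℂ] F))ᗮ : Set E) by
    rw [hs]; exact (LinearMap.ker (A : E →ₗ[ℂ] F)).isClosed_orthogonal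
  apply Set.Subset.antisymm
  · rw [← closure_range_adjoint]; exact subset_closure
  · intro x hx
    rw [SetLike.mem_coe, Submodule.mem_orthogonal] at hx
    -- the closed range of A, as a complete Hilbert space
    set K : Submodule ℂ F := LinearMap.range (A : E →ₗ[ℂ] F) with hKdef
    have hKclosed : IsClosed (K : Set F) := h
    haveI : CompleteSpace K := hKclosed.completeSpace_coe
    set B : E →L[ℂ] K := A.codRestrict K (fun u => LinearMap.mem_range_self _ u) with hBdef
    have hBA : ∀ u : E, ((B u : F)) = A u := fun u => rfl
    have hBsurj : Function.Surjective B := by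
      rintro ⟨v, u, rfl⟩
      exact ⟨u, rfl⟩
    obtain ⟨C, Cpos, hC⟩ := B.exists_preimage_norm_le hBsurj
    choose g hg1 hg2 using hC
    have hgA : ∀ z : K, A (g z) = (z : F) := by
      intro z; rw [← hBA, hg1]
    have hx' : ∀ v : E, A v = 0 → ⟪x, v⟫ = 0 := by
      intro v hv
      have := hx v (by simpa [LinearMap.mem_ker] using hv)
      rw [← inner_conj_symm, this, map_zero]
    have hdiff : ∀ u w : E, A u = A w → ⟪x, u⟫ = ⟪x, w⟫ := by
      intro u w huw
      have h0 : A (u - w) = 0 := by rw [map_sub, huw, sub_self]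
      have := hx' _ h0
      rw [inner_sub_right, sub_eq_zero] at this
      exact this
    set ψ : K →ₗ[ℂ] ℂ :=
      { toFun := fun z => ⟪x, g z⟫
        map_add' := by
          intro z w
          rw [← inner_add_right]
          exact hdiff _ _ (by rw [hgA, map_add, hgA, hgA]; rfl)
        map_smul' := by
          intro c z
          simp only [RingHom.id_apply]
          rw [smul_eq_mul, ← inner_smul_right]
          exact hdiff _ _ (by rw [hgA, map_smul, hgA]; rfl) } with hψdef
    have hψb : ∀ z : K, ‖ψ z‖ ≤ ‖x‖ * C * ‖z‖ := by
      intro z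
      calc ‖ψ z‖ = ‖⟪x, g z⟫‖ := rfl
        _ ≤ ‖x‖ * ‖g z‖ := norm_inner_le_norm x (g z)
        _ ≤ ‖x‖ * (C * ‖z‖) := by
            exact mul_le_mul_of_nonneg_left (hg2 z) (norm_nonneg x)
        _ = ‖x‖ * C * ‖z‖ := by ring
    set φ : K →L[ℂ] ℂ := LinearMap.mkContinuous ψ (‖x‖ * C) hψb with hφdef
    set y₀ : K := (toDual ℂ K).symm φ with hy₀def
    refine ⟨(y₀ : F), ext_inner_right ℂ fun u => ?_⟩
    rw [ContinuousLinearMap.adjoint_inner_left]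
    have h1 : ⟪(y₀ : F), A u⟫ = ⟪y₀, B u⟫ := by rw [← hBA]; rfl
    have h2 : ⟪y₀, B u⟫ = φ (B u) := toDual_symm_apply
    have h3 : φ (B u) = ⟪x, g (B u)⟫ := rfl
    rw [h1, h2, h3]
    exact hdiff _ _ (by rw [hgA, hBA])

lemma isClosed_range_adjoint_iff (A : E →L[ℂ] F) :
    IsClosed (Set.range ⇑(adjoint A)) ↔ IsClosed (Set.range ⇑A) := by
  constructor
  · intro h
    have := isClosed_range_adjoint_of (adjoint A) h
    rwa [ContinuousLinearMap.adjoint_adjoint] at this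
  · exact isClosed_range_adjoint_of A

lemma trOp_toDual (B : E →L[ℂ] F) (y : F) :
    trOp B (toDual ℂ F y) = toDual ℂ E (adjoint B y) := by
  ext u
  show (toDual ℂ F y) (B u) = _
  rw [toDual_apply_apply, toDual_apply_apply, ContinuousLinearMap.adjoint_inner_left]

end Aux

set_option maxHeartbeats 1000000 in
/-- under Assumptions A1 and A2,
`ker(R^⊤) = closure { T^⊤ τ : (I + X^⊤) τ = 0 }`, and that set is closed iff
`range((I − X)T)` is closed. -/
theorem statement2
    {Uhat U Lam : Type*}
    [NormedAddCommGroup Uhat] [InnerProductSpace ℂ Uhat] [CompleteSpace Uhat]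
    [NormedAddCommGroup U] [InnerProductSpace ℂ U] [CompleteSpace U]
    [NormedAddCommGroup Lam] [InnerProductSpace ℂ Lam] [CompleteSpace Lam]
    (R : Uhat →L[ℂ] U) (T : U →L[ℂ] Lam) (X : Lam →L[ℂ] Lam)
    -- Assumption A1
    (hRinj : LinearMap.ker (R : Uhat →ₗ[ℂ] U) = ⊥)
    (hRclosed : IsClosed (Set.range R))
    -- Assumption A2
    (hX2 : X.comp X = ContinuousLinearMap.id ℂ Lam)
    (hA2 : LinearMap.range (R : Uhat →ₗ[ℂ] U) = LinearMap.ker ((ContinuousLinearMap.id ℂ Lam - X).comp T : U →ₗ[ℂ] Lam)) :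
    (LinearMap.ker (trOp R : (U →L[ℂ] ℂ) →ₗ[ℂ] (Uhat →L[ℂ] ℂ)) : Set (U →L[ℂ] ℂ)) =
        closure (⇑(trOp T) '' {τ : Lam →L[ℂ] ℂ | τ + trOp X τ = 0}) ∧
    (IsClosed (⇑(trOp T) '' {τ : Lam →L[ℂ] ℂ | τ + trOp X τ = 0}) ↔
      IsClosed (Set.range fun u : U => T u - X (T u))) := by
  set A : U →L[ℂ] Lam := (ContinuousLinearMap.id ℂ Lam - X).comp T with hAdef
  have hArange : (Set.range fun u : U => T u - X (T u)) = Set.range ⇑A := by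
    apply congrArg Set.range
    funext u
    simp [hAdef]
  -- the adjoint of X squares to the identity
  have hXadj : (adjoint X).comp (adjoint X) = ContinuousLinearMap.id ℂ Lam := by
    have := congrArg ContinuousLinearMap.adjoint hX2
    rwa [ContinuousLinearMap.adjoint_comp, adjoint_id] at this
  have hXadj' : ∀ l : Lam, adjoint X (adjoint X l) = l := by
    intro l
    have h := congrArg (fun f : Lam →L[ℂ] Lam => f l) hXadj
    simpa using h
  -- the adjoint of A
  have hAadj : ∀ σ : Lam, adjoint A σ = adjoint T (σ - adjoint X σ) := by
    intro σ
    rw [hAdef, ContinuousLinearMap.adjoint_comp]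
    have hsub : adjoint (ContinuousLinearMap.id ℂ Lam - X)
        = ContinuousLinearMap.id ℂ Lam - adjoint X := by
      rw [map_sub, adjoint_id]
    rw [ContinuousLinearMap.comp_apply, hsub]
    rfl
  -- the antisymmetric set for `X†`, and its image under `T†`
  set SΛ : Set Lam := {l : Lam | l + adjoint X l = 0} with hSdef
  have hset : ⇑(adjoint T) '' SΛ = Set.range ⇑(adjoint A) := by
    ext x
    constructor
    · rintro ⟨l, hl, rfl⟩
      have hXl : adjoint X l = -l := eq_neg_of_add_eq_zero_right hl
      refine ⟨(2⁻¹ : ℂ) • l, ?_⟩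
      rw [hAadj, map_smul, hXl, smul_neg, sub_neg_eq_add]
      congr 1
      module
    · rintro ⟨σ, rfl⟩
      refine ⟨σ - adjoint X σ, ?_, ?_⟩
      · show (σ - adjoint X σ) + adjoint X (σ - adjoint X σ) = 0
        rw [map_sub, hXadj' σ]
        abel
      · exact (hAadj σ).symm
  -- Hilbert-space level identity for the kernel
  have hker : (LinearMap.ker (adjoint R : U →ₗ[ℂ] Uhat) : Set U) = closure (Set.range ⇑(adjoint A)) := by
    rw [closure_range_adjoint, ker_adjoint_eq, hA2]
  -- transport along the (anti-linear) Riesz isometries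
  set JU : U ≃ₗᵢ⋆[ℂ] StrongDual ℂ U := toDual ℂ U with hJU
  set JUhat : Uhat ≃ₗᵢ⋆[ℂ] StrongDual ℂ Uhat := toDual ℂ Uhat with hJUhat
  set JΛ : Lam ≃ₗᵢ⋆[ℂ] StrongDual ℂ Lam := toDual ℂ Lam with hJΛ
  have hcl : ∀ s : Set U, closure (⇑JU '' s) = ⇑JU '' closure s := by
    intro s
    rw [← LinearIsometryEquiv.coe_toHomeomorph, JU.toHomeomorph.image_closure]
  have hclosed_iff : ∀ s : Set U, IsClosed (⇑JU '' s) ↔ IsClosed s := by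
    intro s
    rw [← LinearIsometryEquiv.coe_toHomeomorph]
    exact JU.toHomeomorph.isClosed_image
  have hkerset : (LinearMap.ker (trOp R : (U →L[ℂ] ℂ) →ₗ[ℂ] (Uhat →L[ℂ] ℂ)) : Set (U →L[ℂ] ℂ))
      = ⇑JU '' (LinearMap.ker (adjoint R : U →ₗ[ℂ] Uhat) : Set U) := by
    ext f
    obtain ⟨u, rfl⟩ := JU.surjective f
    simp only [Set.mem_image, SetLike.mem_coe, LinearMap.mem_ker, ContinuousLinearMap.coe_coe]
    constructor
    · intro hf
      refine ⟨u, ?_, rfl⟩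
      apply JUhat.injective
      rw [map_zero, hJUhat, ← trOp_toDual]
      exact hf
    · rintro ⟨u', hu', hequ⟩
      obtain rfl : u' = u := JU.injective hequ
      rw [hJU, trOp_toDual, hu', map_zero]
  have hSset : {τ : Lam →L[ℂ] ℂ | τ + trOp X τ = 0} = ⇑JΛ '' SΛ := by
    ext τ
    obtain ⟨l, rfl⟩ := JΛ.surjective τ
    simp only [Set.mem_setOf_eq, Set.mem_image]
    constructor
    · intro hτ
      refine ⟨l, ?_, rfl⟩
      show l + adjoint X l = 0
      apply JΛ.injective
      rw [map_add, map_zero, hJΛ, ← trOp_toDual]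
      exact hτ
    · rintro ⟨l', hl', heq⟩
      rw [← heq, hJΛ, trOp_toDual, ← map_add,
        (show l' + adjoint X l' = 0 from hl'), map_zero]
  have himage : ⇑(trOp T) '' {τ : Lam →L[ℂ] ℂ | τ + trOp X τ = 0}
      = ⇑JU '' (⇑(adjoint T) '' SΛ) := by
    rw [hSset, ← Set.image_comp, ← Set.image_comp]
    apply Set.image_congr
    intro l _
    show trOp T (JΛ l) = JU (adjoint T l)
    rw [hJΛ, hJU]
    exact trOp_toDual T l
  constructor
  · rw [hkerset, hker, himage, hset, hcl]
  · rw [himage, hset, hclosed_iff, isClosed_range_adjoint_iff, hArange]
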